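/- For all real parameters λ > 0 with λ ≠ 1 and φ > 0, and every real r > 0, the r-th moment of the SMPtW distribution satisfies ∫₀^∞ y^r · ((log λ) φ y^(φ−1) exp((log λ)·exp(−y^φ) − y^φ))/(λ − 1) dy = ((log λ)/(λ − 1)) · Γ(r/φ + 1) · Σ_{j=0}^∞ (log λ)^j / (j! · (j + 1)^(r/φ + 1)). -/

import Mathlib

open Real MeasureTheory

/-- The SMPtW probability density function with parameters `lam > 0`, `lam ≠ 1`, `phi > 0`. -/
noncomputable def smptwPDF (lam phi y : ℝ) : ℝ :=
  (Real.log lam * phi * y ^ (phi - 1) *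
    Real.exp (Real.log lam * Real.exp (-(y ^ phi)) - y ^ phi)) / (lam - 1)

private lemma aux_integrable {a : ℝ} (ha : 0 < a) {b : ℝ} (hb : 0 < b) :
    IntegrableOn (fun t : ℝ => t ^ a * Real.exp (-(b * t))) (Set.Ioi 0) := by
  have h0 := Real.GammaIntegral_convergent (s := a + 1) (by linarith)
  rw [← mul_zero b, ← integrableOn_Ioi_comp_mul_left_iff _ _ hb] at h0
  have h1 : IntegrableOn (fun x : ℝ => ((b : ℝ) ^ a)⁻¹ * (Real.exp (-(b * x)) * (b * x) ^ (a + 1 - 1))) (Set.Ioi 0) := h0.const_mul _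
  refine h1.congr_fun (fun t ht => ?_) measurableSet_Ioi
  have ht' : (0 : ℝ) < t := ht
  have : (b * t) ^ (a + 1 - 1) = b ^ a * t ^ a := by
    rw [add_sub_cancel_right, Real.mul_rpow hb.le ht'.le]
  beta_reduce
  rw [this]
  field_simp [(Real.rpow_pos_of_pos hb a).ne']

private lemma aux_integral {a : ℝ} (ha : 0 < a) {b : ℝ} (hb : 0 < b) :
    ∫ t in Set.Ioi (0 : ℝ), t ^ a * Real.exp (-(b * t))
      = (1 / b) ^ (a + 1) * Real.Gamma (a + 1) := by
  have := Real.integral_rpow_mul_exp_neg_mul_Ioi (a := a + 1) (r := b) (by linarith) hb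
  simpa [add_sub_cancel_right] using this

/-- the `r`-th moment of the SMPtW distribution. -/
theorem smptw_rth_moment (lam phi r : ℝ)
    (hlam : 0 < lam) (hlam1 : lam ≠ 1) (hphi : 0 < phi) (hr : 0 < r) :
    ∫ y in Set.Ioi (0 : ℝ), y ^ r * smptwPDF lam phi y =
      (Real.log lam / (lam - 1)) * Real.Gamma (r / phi + 1) *
        ∑' j : ℕ, (Real.log lam) ^ j /
          ((j.factorial : ℝ) * ((j : ℝ) + 1) ^ (r / phi + 1)) := by
  set c := Real.log lam with hc
  set a := r / phi with haa
  have ha : 0 < a := div_pos hr hphi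
  -- Step 1: substitution t = y ^ phi
  have hsub : ∫ y in Set.Ioi (0 : ℝ), y ^ r * smptwPDF lam phi y
      = (c / (lam - 1)) * ∫ t in Set.Ioi (0 : ℝ),
          t ^ a * Real.exp (c * Real.exp (-t) - t) := by
    rw [← MeasureTheory.integral_const_mul]
    rw [← integral_comp_rpow_Ioi_of_pos
      (g := fun t => (c / (lam - 1)) * (t ^ a * Real.exp (c * Real.exp (-t) - t))) hphi]
    refine setIntegral_congr_fun measurableSet_Ioi (fun y hy => ?_)
    have hy' : (0 : ℝ) < y := hy
    have hpow : (y ^ phi) ^ a = y ^ r := by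
      rw [← Real.rpow_mul hy'.le, haa, mul_div_cancel₀ _ hphi.ne']
    simp only [smul_eq_mul, smptwPDF, hpow, ← hc]
    field_simp
  -- Term functions
  set F : ℕ → ℝ → ℝ := fun j t =>
    (c ^ j / (j.factorial : ℝ)) * (t ^ a * Real.exp (-(((j : ℝ) + 1) * t))) with hF
  have hbpos : ∀ j : ℕ, (0 : ℝ) < (j : ℝ) + 1 := fun j => by positivity
  have hFint : ∀ j : ℕ, IntegrableOn (F j) (Set.Ioi 0) :=
    fun j => (aux_integrable ha (hbpos j)).const_mul _
  have hFval : ∀ j : ℕ, ∫ t in Set.Ioi (0 : ℝ), F j t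
      = (c ^ j / (j.factorial : ℝ)) * ((1 / ((j : ℝ) + 1)) ^ (a + 1) * Real.Gamma (a + 1)) := by
    intro j
    simp only [hF]
    rw [MeasureTheory.integral_const_mul, aux_integral ha (hbpos j)]
  -- Pointwise HasSum
  have hptw : ∀ t ∈ Set.Ioi (0 : ℝ),
      HasSum (fun j => F j t) (t ^ a * Real.exp (c * Real.exp (-t) - t)) := by
    intro t ht
    have h1 : HasSum (fun j : ℕ => (c * Real.exp (-t)) ^ j / (j.factorial : ℝ))
        (Real.exp (c * Real.exp (-t))) := by
      rw [Real.exp_eq_exp_ℝ]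
      exact NormedSpace.expSeries_div_hasSum_exp _
    have h2 := h1.mul_left (t ^ a * Real.exp (-t))
    have heq : (fun j : ℕ => t ^ a * Real.exp (-t) *
        ((c * Real.exp (-t)) ^ j / (j.factorial : ℝ))) = fun j => F j t := by
      funext j
      simp only [hF]
      have : Real.exp (-(((j : ℝ) + 1) * t)) = Real.exp (-t) ^ j * Real.exp (-t) := by
        rw [← Real.exp_nat_mul, ← Real.exp_add]
        ring_nf
      rw [this, mul_pow]
      ring
    rw [heq] at h2
    have h3 : t ^ a * Real.exp (c * Real.exp (-t) - t) = t ^ a * Real.exp (-t) * Real.exp (c * Real.exp (-t)) := by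
      rw [sub_eq_add_neg, Real.exp_add]; ring
    rw [h3]; exact h2
  -- summability of integrals of norms
  have hnorm : ∀ j : ℕ, (∫ t in Set.Ioi (0 : ℝ), ‖F j t‖)
      ≤ (|c| ^ j / (j.factorial : ℝ)) * Real.Gamma (a + 1) := by
    intro j
    have hval : (∫ t in Set.Ioi (0 : ℝ), ‖F j t‖)
        = (|c| ^ j / (j.factorial : ℝ)) *
          ((1 / ((j : ℝ) + 1)) ^ (a + 1) * Real.Gamma (a + 1)) := by
      have : ∀ t ∈ Set.Ioi (0 : ℝ), ‖F j t‖
          = (|c| ^ j / (j.factorial : ℝ)) * (t ^ a * Real.exp (-(((j : ℝ) + 1) * t))) := by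
        intro t ht
        have ht' : (0 : ℝ) < t := ht
        simp only [hF]
        rw [norm_mul, Real.norm_eq_abs, Real.norm_eq_abs, abs_div, abs_pow,
          Nat.abs_cast, abs_mul, abs_of_nonneg (Real.rpow_nonneg ht'.le a),
          Real.abs_exp]
      rw [setIntegral_congr_fun measurableSet_Ioi this,
        MeasureTheory.integral_const_mul, aux_integral ha (hbpos j)]
    rw [hval]
    have h1 : (1 / ((j : ℝ) + 1)) ^ (a + 1) ≤ 1 := by
      apply Real.rpow_le_one (by positivity)
      · rw [div_le_one (hbpos j)]; linarith [hbpos j]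
      · linarith
    have h2 : (0 : ℝ) ≤ Real.Gamma (a + 1) := Real.Gamma_nonneg_of_nonneg (by linarith)
    calc (|c| ^ j / (j.factorial : ℝ)) * ((1 / ((j : ℝ) + 1)) ^ (a + 1) * Real.Gamma (a + 1))
        ≤ (|c| ^ j / (j.factorial : ℝ)) * (1 * Real.Gamma (a + 1)) := by
          apply mul_le_mul_of_nonneg_left (by nlinarith) (by positivity)
      _ = (|c| ^ j / (j.factorial : ℝ)) * Real.Gamma (a + 1) := by ring
  have hsummable : Summable fun j : ℕ => ∫ t in Set.Ioi (0 : ℝ), ‖F j t‖ := by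
    apply Summable.of_nonneg_of_le
      (fun j => integral_nonneg (fun t => norm_nonneg _)) hnorm
    exact ((Real.summable_pow_div_factorial |c|).mul_right (Real.Gamma (a + 1)))
  -- swap
  have hswap : (∑' j : ℕ, ∫ t in Set.Ioi (0 : ℝ), F j t)
      = ∫ t in Set.Ioi (0 : ℝ), t ^ a * Real.exp (c * Real.exp (-t) - t) := by
    rw [MeasureTheory.integral_tsum_of_summable_integral_norm hFint hsummable]
    exact setIntegral_congr_fun measurableSet_Ioi (fun t ht => (hptw t ht).tsum_eq)
  rw [hsub, ← hswap]
  -- final algebra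
  have hterm : ∀ j : ℕ, (∫ t in Set.Ioi (0 : ℝ), F j t)
      = Real.Gamma (a + 1) *
        (c ^ j / ((j.factorial : ℝ) * ((j : ℝ) + 1) ^ (a + 1))) := by
    intro j
    rw [hFval j, one_div, Real.inv_rpow (hbpos j).le]
    have h1 : ((j : ℝ) + 1) ^ (a + 1) ≠ 0 := (Real.rpow_pos_of_pos (hbpos j) _).ne'
    have h2 : (j.factorial : ℝ) ≠ 0 := Nat.cast_ne_zero.mpr j.factorial_ne_zero
    field_simp
  rw [tsum_congr hterm, tsum_mul_left]
  ring
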